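/- Let N ≥ 2 be an integer and let λ ∈ [0, ((N−1)/2)²]. Set γ = √((N−1)² − 4λ) and h = (γ+1)/2. Then for every r > 0, W̃_λ(r) := λ + h²/r² + ((N/2)² − h²)/ sinh² r + (γ·h/r)·(coth r − 1/r) > 0. -/

import Mathlib

open Real

lemma aux_sinh_le (r : ℝ) (hr : 0 ≤ r) : Real.sinh r ≤ r * Real.cosh r := by
  have key : MonotoneOn (fun x : ℝ => x * Real.cosh x - Real.sinh x) (Set.Ici 0) := by
    have hd : ∀ x : ℝ, HasDerivAt (fun x : ℝ => x * Real.cosh x - Real.sinh x)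
        (x * Real.sinh x) x := by
      intro x
      have h1 : HasDerivAt (fun x : ℝ => x * Real.cosh x)
          (1 * Real.cosh x + x * Real.sinh x) x :=
        (hasDerivAt_id x).mul (Real.hasDerivAt_cosh x)
      have h2 := h1.sub (Real.hasDerivAt_sinh x)
      exact h2.congr_deriv (by ring)
    apply monotoneOn_of_deriv_nonneg (convex_Ici 0)
    · exact (Continuous.sub (continuous_id.mul Real.continuous_cosh)
        Real.continuous_sinh).continuousOn
    · intro x _
      exact (hd x).differentiableAt.differentiableWithinAt
    · intro x hx
      rw [(hd x).deriv]
      have hx0 : 0 ≤ x := by simpa [interior_Ici] using le_of_lt (by simpa [interior_Ici] using hx : (0:ℝ) < x)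
      exact mul_nonneg hx0 (Real.sinh_nonneg_iff.mpr hx0)
  have := key (Set.self_mem_Ici) (Set.mem_Ici.mpr hr) hr
  simp at this
  linarith

theorem stmt_19 (N : ℕ) (hN : 2 ≤ N) (lam : ℝ)
    (hlam : lam ∈ Set.Icc (0 : ℝ) ((((N : ℝ) - 1) / 2) ^ 2))
    (γ h : ℝ) (hγ : γ = Real.sqrt (((N : ℝ) - 1) ^ 2 - 4 * lam))
    (hh : h = (γ + 1) / 2) :
    ∀ r ∈ Set.Ioi (0 : ℝ),
      0 < lam + h ^ 2 / r ^ 2 + (((N : ℝ) / 2) ^ 2 - h ^ 2) / Real.sinh r ^ 2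
        + (γ * h / r) * (Real.cosh r / Real.sinh r - 1 / r) := by
  intro r hr
  rw [Set.mem_Ioi] at hr
  obtain ⟨hl0, hlu⟩ := hlam
  have hN1 : (1 : ℝ) ≤ (N : ℝ) - 1 := by
    have : (2 : ℝ) ≤ (N : ℝ) := by exact_mod_cast hN
    linarith
  have hγ0 : 0 ≤ γ := hγ ▸ Real.sqrt_nonneg _
  have hγle : γ ≤ (N : ℝ) - 1 := by
    rw [hγ]
    calc Real.sqrt (((N : ℝ) - 1) ^ 2 - 4 * lam) ≤ Real.sqrt (((N : ℝ) - 1) ^ 2) :=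
          Real.sqrt_le_sqrt (by linarith)
      _ = (N : ℝ) - 1 := Real.sqrt_sq (by linarith)
  have hh0 : 0 < h := by rw [hh]; linarith
  have hhle : h ≤ (N : ℝ) / 2 := by rw [hh]; linarith
  have hsinh : 0 < Real.sinh r := Real.sinh_pos_iff.mpr hr
  have t1 : 0 < h ^ 2 / r ^ 2 := by positivity
  have t2 : 0 ≤ (((N : ℝ) / 2) ^ 2 - h ^ 2) / Real.sinh r ^ 2 := by
    apply div_nonneg _ (by positivity)
    have : h ^ 2 ≤ ((N : ℝ) / 2) ^ 2 := by nlinarith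
    linarith
  have t3 : 0 ≤ (γ * h / r) * (Real.cosh r / Real.sinh r - 1 / r) := by
    apply mul_nonneg (by positivity)
    rw [sub_nonneg, div_le_div_iff₀ hr hsinh]
    have := aux_sinh_le r hr.le
    linarith
  linarith
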